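/- Fix k ≥ 1, continuous functions a₁,…,a_k : [τ,∞) → ℝ and ε : [τ,∞) → ℝ, and nonnegative initial values p₁,…,p_k with p₁+⋯+p_k ≤ 1. Define for t ≥ τ: x_i(t) = p_i·e^{-∫_τ^t (a_i(s)-ε(s))ds} / (Σ_{j=1}^k p_j·e^{-∫_τ^t (a_j(s)-ε(s))ds} + 1 - Σ_{j=1}^k p_j). Then each x_i is differentiable and satisfies the coupled ODE system x_i'(t) = (−a_i(t) + ε(t) + Σ_{j=1}^k (a_j(t) − ε(t))·x_j(t))·x_i(t) with x_i(τ) = p_i. -/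

import Mathlib

open intervalIntegral

/-- Auxiliary: the exponential factor in formula (3.2). -/
noncomputable def Efac (a ε : ℝ → ℝ) (τ t : ℝ) : ℝ :=
  Real.exp (-(∫ s in τ..t, (a s - ε s)))

lemma Efac_hasDerivAt (a ε : ℝ → ℝ) (ha : Continuous a) (hε : Continuous ε)
    (τ t : ℝ) :
    HasDerivAt (Efac a ε τ) (Efac a ε τ t * -(a t - ε t)) t := by
  have h1 : HasDerivAt (fun u => ∫ s in τ..u, (a s - ε s)) (a t - ε t) t :=
    ((ha.sub hε).integral_hasStrictDerivAt τ t).hasDerivAt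
  unfold Efac
  simpa [Efac, mul_comm] using h1.neg.exp

/-- The explicit formula (3.2) solves the normalized filtering ODE system (B.1)
between observation times in the mother-quake model. -/
theorem filtering_ode_solution (k : ℕ) (hk : 1 ≤ k) (τ : ℝ)
    (a : Fin k → ℝ → ℝ) (ε : ℝ → ℝ)
    (ha : ∀ i, Continuous (a i)) (hε : Continuous ε)
    (p : Fin k → ℝ) (hp : ∀ i, 0 ≤ p i) (hpsum : ∑ j, p j ≤ 1)
    (hnd : ∑ j, p j = 1 → ∃ j, 0 < p j)
    (x : Fin k → ℝ → ℝ)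
    (hx : ∀ i t, x i t =
      p i * Real.exp (-(∫ s in τ..t, (a i s - ε s))) /
        ((∑ j, p j * Real.exp (-(∫ s in τ..t, (a j s - ε s)))) + 1 - ∑ j, p j)) :
    (∀ i, x i τ = p i) ∧
      ∀ i t, τ ≤ t →
        HasDerivAt (x i)
          ((-(a i t) + ε t + ∑ j, (a j t - ε t) * x j t) * x i t) t := by
  have hEpos : ∀ i t, 0 < Efac (a i) ε τ t := fun i t => Real.exp_pos _
  set D : ℝ → ℝ := fun t => (∑ j, p j * Efac (a j) ε τ t) + 1 - ∑ j, p j with hDdef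
  have hDpos : ∀ t, 0 < D t := by
    intro t
    have hsum0 : 0 ≤ ∑ j, p j * Efac (a j) ε τ t :=
      Finset.sum_nonneg fun j _ => mul_nonneg (hp j) (hEpos j t).le
    rcases lt_or_eq_of_le hpsum with h | h
    · simp only [hDdef]; linarith
    · obtain ⟨j, hj⟩ := hnd h
      have h1 : p j * Efac (a j) ε τ t ≤ ∑ j, p j * Efac (a j) ε τ t :=
        Finset.single_le_sum (fun j _ => mul_nonneg (hp j) (hEpos j t).le)
          (Finset.mem_univ j)
      have h2 := mul_pos hj (hEpos j t)
      simp only [hDdef]; linarith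
  have hxf : ∀ i t, x i t = p i * Efac (a i) ε τ t / D t := by
    intro i t
    simpa [Efac, hDdef] using hx i t
  constructor
  · intro i
    rw [hxf]
    simp [Efac, hDdef, intervalIntegral.integral_same]
  · intro i t _
    have hDne : D t ≠ 0 := (hDpos t).ne'
    have hDderiv : HasDerivAt D (∑ j, p j * (Efac (a j) ε τ t * -(a j t - ε t))) t := by
      have h1 : HasDerivAt (fun u => ∑ j, p j * Efac (a j) ε τ u)
          (∑ j, p j * (Efac (a j) ε τ t * -(a j t - ε t))) t :=
        HasDerivAt.fun_sum fun j _ => (Efac_hasDerivAt (a j) ε (ha j) hε τ t).const_mul (p j)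
      simpa [hDdef, sub_eq_add_neg] using (h1.add_const 1).sub_const (∑ j, p j)
    have hNderiv : HasDerivAt (fun u => p i * Efac (a i) ε τ u)
        (p i * (Efac (a i) ε τ t * -(a i t - ε t))) t :=
      (Efac_hasDerivAt (a i) ε (ha i) hε τ t).const_mul (p i)
    have hdiv := hNderiv.fun_div hDderiv hDne
    have hfun : x i = fun u => p i * Efac (a i) ε τ u / D u := funext fun u => hxf i u
    rw [hfun]
    convert hdiv using 1
    all_goals try rfl
    have hs : ∑ j, (a j t - ε t) * x j t
        = (∑ j, (a j t - ε t) * (p j * Efac (a j) ε τ t)) / D t := by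
      rw [Finset.sum_div]
      exact Finset.sum_congr rfl fun j _ => by rw [hxf]; ring
    have hneg : ∑ j, p j * (Efac (a j) ε τ t * -(a j t - ε t))
        = -∑ j, (a j t - ε t) * (p j * Efac (a j) ε τ t) := by
      rw [← Finset.sum_neg_distrib]
      exact Finset.sum_congr rfl fun j _ => by ring
    simp only [hs, hneg]
    field_simp
    ring
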